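/- For every infinite set A, there is no boundedly finite-to-one function from B(A), the set of partitions of A all of whose blocks are finite, to fin(A), the set of finite subsets of A. -/
import Mathlib


/-- `f` is boundedly finite-to-one: some `k` bounds the size of every fiber. -/
def BddFinToOne {α β : Type*} (f : α → β) : Prop :=
  ∃ k : ℕ, ∀ b : β, (f ⁻¹' {b}).Finite ∧ (f ⁻¹' {b}).ncard ≤ k

/-- `P` is a partition of `A` all of whose blocks are finite. -/
def IsFinitePartition (A : Type*) (P : Set (Set A)) : Prop :=
  (∀ p ∈ P, p.Nonempty ∧ p.Finite) ∧
  (∀ p ∈ P, ∀ q ∈ P, p ≠ q → p ∩ q = ∅) ∧ ⋃₀ P = Set.univ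

section aux

variable {A : Type*} [Infinite A]

noncomputable def auxEquiv (A : Type*) [Infinite A] : A ≃ A × Bool :=
  Classical.choice <| Cardinal.eq.1 <| by
    simp only [Cardinal.mk_prod, Cardinal.mk_bool, Cardinal.lift_uzero, Cardinal.lift_ofNat]
    exact (Cardinal.mul_eq_left (Cardinal.aleph0_le_mk A)
      ((Cardinal.nat_lt_aleph0 2).le.trans (Cardinal.aleph0_le_mk A))
      (by norm_num)).symm

noncomputable def u (a : A) : A := (auxEquiv A).symm (a, true)
noncomputable def v (a : A) : A := (auxEquiv A).symm (a, false)

lemma u_inj : Function.Injective (u (A := A)) := fun a b h => by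
  have := congrArg (fun x => ((auxEquiv A) x).1) h
  simpa [u] using this

lemma v_inj : Function.Injective (v (A := A)) := fun a b h => by
  have := congrArg (fun x => ((auxEquiv A) x).1) h
  simpa [v] using this

lemma u_ne_v (a b : A) : u a ≠ v b := fun h => by
  have := congrArg (fun x => ((auxEquiv A) x).2) h
  simp [u, v] at this

/-- The partition associated to a set `S`. -/
def part (S : Set A) : Set (Set A) :=
  {b | ∃ a, (a ∈ S ∧ b = {u a, v a}) ∨ (a ∉ S ∧ (b = {u a} ∨ b = {v a}))}

lemma part_isPartition (S : Set A) : IsFinitePartition A (part S) := by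
  refine ⟨?_, ?_, ?_⟩
  · rintro p ⟨a, ⟨_, rfl⟩ | ⟨_, rfl | rfl⟩⟩
    · exact ⟨⟨u a, by simp⟩, (Set.finite_singleton _).insert _⟩
    · exact ⟨⟨u a, rfl⟩, Set.finite_singleton _⟩
    · exact ⟨⟨v a, rfl⟩, Set.finite_singleton _⟩
  · rintro p ⟨a, hp⟩ q ⟨a', hq⟩ hne
    by_contra h
    obtain ⟨x, hxp, hxq⟩ := Set.nonempty_iff_ne_empty.2 h
    -- x lies in both blocks; first show a = a'
    have key : ∀ (c : A), (x ∈ ({u c, v c} : Set A) ∨ x = u c ∨ x = v c) →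
        c = ((auxEquiv A) x).1 := by
      rintro c hc
      rcases hc with (hc | hc) | hc | hc <;> subst hc <;> simp [u, v]
    have ha : a = ((auxEquiv A) x).1 := by
      rcases hp with ⟨_, rfl⟩ | ⟨_, rfl | rfl⟩
      · exact key a (Or.inl hxp)
      · exact key a (Or.inr (Or.inl hxp))
      · exact key a (Or.inr (Or.inr hxp))
    have ha' : a' = ((auxEquiv A) x).1 := by
      rcases hq with ⟨_, rfl⟩ | ⟨_, rfl | rfl⟩
      · exact key a' (Or.inl hxq)
      · exact key a' (Or.inr (Or.inl hxq))
      · exact key a' (Or.inr (Or.inr hxq))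
    have haa : a = a' := ha.trans ha'.symm
    subst haa
    rcases hp with ⟨hS, rfl⟩ | ⟨hS, rfl | rfl⟩ <;>
      rcases hq with ⟨hS', rfl⟩ | ⟨hS', rfl | rfl⟩ <;>
      first
        | exact hne rfl
        | exact hS' hS
        | exact hS hS'
        | (simp only [Set.mem_singleton_iff] at hxp hxq; subst hxp;
           first
             | exact u_ne_v a a hxq
             | exact u_ne_v a a hxq.symm)
  · ext x
    simp only [Set.mem_sUnion, Set.mem_univ, iff_true]
    set a := ((auxEquiv A) x).1 with ha
    have hx2 : x = (auxEquiv A).symm (a, ((auxEquiv A) x).2) := by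
      rw [ha]; simp
    have hx : x = u a ∨ x = v a := by
      rcases Bool.eq_false_or_eq_true ((auxEquiv A) x).2 with h | h
      · left; simp only [u]; rw [hx2, h]
      · right; simp only [v]; rw [hx2, h]
    by_cases hS : a ∈ S
    · exact ⟨{u a, v a}, ⟨a, Or.inl ⟨hS, rfl⟩⟩, by rcases hx with h | h <;> simp [h]⟩
    · rcases hx with h | h
      · exact ⟨{u a}, ⟨a, Or.inr ⟨hS, Or.inl rfl⟩⟩, by simp [h]⟩
      · exact ⟨{v a}, ⟨a, Or.inr ⟨hS, Or.inr rfl⟩⟩, by simp [h]⟩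

lemma part_inj : Function.Injective (part (A := A)) := by
  intro S T h
  have key : ∀ S : Set A, ∀ a, a ∈ S ↔ ({u a, v a} : Set A) ∈ part S := by
    intro S a
    constructor
    · intro hS; exact ⟨a, Or.inl ⟨hS, rfl⟩⟩
    · rintro ⟨a', ⟨hS, he⟩ | ⟨hS, he | he⟩⟩
      · have h1 : u a ∈ ({u a', v a'} : Set A) := he ▸ (by simp)
        rcases h1 with h' | h'
        · obtain rfl := u_inj h'; exact hS
        · exact absurd h' (u_ne_v _ _)
      · have h1 : v a ∈ ({u a'} : Set A) := he ▸ (by simp)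
        exact absurd h1.symm (u_ne_v _ _)
      · have h1 : u a ∈ ({v a'} : Set A) := he ▸ (by simp)
        exact absurd h1 (u_ne_v _ _)
  ext a
  rw [key S a, key T a, h]

end aux

open Cardinal in
/-- For every infinite set `A`, there is no boundedly finite-to-one function from
`B(A)`, the set of partitions of `A` into finite blocks, to `fin(A)`, the set of
finite subsets of `A`. -/
theorem stmt_14 (A : Type*) [Infinite A]
    (f : {P : Set (Set A) // IsFinitePartition A P} → {s : Set A // s.Finite}) :
    ¬ BddFinToOne f := by
  rintro ⟨k, hk⟩
  -- #(Set A) ≤ #domain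
  have h1 : #(Set A) ≤ #{P : Set (Set A) // IsFinitePartition A P} :=
    mk_le_of_injective (f := fun S => ⟨part S, part_isPartition S⟩)
      (fun S T h => part_inj (congrArg Subtype.val h))
  -- #domain ≤ #codomain * k
  have h2 : #{P : Set (Set A) // IsFinitePartition A P} ≤ #{s : Set A // s.Finite} * k := by
    rw [Cardinal.mk_congr (Equiv.sigmaFiberEquiv f).symm, mk_sigma]
    have hle : ∀ b, #{x // f x = b} ≤ (k : Cardinal) := by
      intro b
      obtain ⟨hfin, hcard⟩ := hk b
      have : {x // f x = b} = (f ⁻¹' {b} : Set _) := rfl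
      rw [this]
      have inst := hfin.fintype
      rw [mk_fintype]
      have hc : Fintype.card (f ⁻¹' {b} : Set _) = (f ⁻¹' {b}).ncard := by
        rw [← Nat.card_coe_set_eq, Nat.card_eq_fintype_card]
      rw [hc]
      exact_mod_cast hcard
    calc (Cardinal.sum fun b => #{x // f x = b})
        ≤ Cardinal.sum (fun _ : {s : Set A // s.Finite} => (k : Cardinal)) :=
          Cardinal.sum_le_sum _ _ hle
      _ = #{s : Set A // s.Finite} * k := by rw [Cardinal.sum_const, lift_id, lift_natCast]
  -- #codomain = #A
  have h3 : #{s : Set A // s.Finite} = #A := by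
    have e : Finset A ≃ {s : Set A // s.Finite} :=
      { toFun := fun t => ⟨↑t, t.finite_toSet⟩
        invFun := fun s => s.2.toFinset
        left_inv := fun t => by simp
        right_inv := fun s => by simp }
    rw [← Cardinal.mk_congr e, mk_finset_of_infinite]
  have h4 : #A * k ≤ #A := by
    rcases Nat.eq_zero_or_pos k with rfl | hkpos
    · simp
    · calc #A * (k : Cardinal) ≤ #A * ℵ₀ :=
            mul_le_mul_right (nat_lt_aleph0 k).le _
        _ = #A := mul_aleph0_eq (aleph0_le_mk A)
  have : #(Set A) ≤ #A := le_trans h1 (le_trans h2 (by rw [h3]; exact h4))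
  exact absurd this (not_le.2 (by rw [mk_set]; exact cantor _))
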